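/- Let E be an ℝ-linear subspace of ℝⁿ and D a discrete additive subgroup of ℝⁿ with E ∩ span_ℝ(D) = {0}. Then every ℝ-linear subspace V of ℝⁿ with V ⊆ E + D satisfies V ⊆ E. In particular, the maximal dimension of a linear subspace contained in the closed subgroup E + D equals dim_ℝ(E). -/

import Mathlib

open Pointwise

/-- `pdim G` is the maximal dimension of an `ℝ`-linear subspace of `ℝⁿ`
contained in the set `G`. -/
noncomputable def pdim {n : ℕ} (G : Set (Fin n → ℝ)) : ℕ :=
  sSup {d : ℕ | ∃ V : Submodule ℝ (Fin n → ℝ), (V : Set (Fin n → ℝ)) ⊆ G ∧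
    Module.finrank ℝ V = d}

/-- A vector all of whose real multiples lie in a discrete subgroup is zero. -/
lemma line_in_discrete_eq_zero {n : ℕ} (D : AddSubgroup (Fin n → ℝ))
    (hD : DiscreteTopology D) (x : Fin n → ℝ) (h : ∀ t : ℝ, t • x ∈ D) : x = 0 := by
  have hopen : IsOpen ({(0 : D)} : Set D) := isOpen_discrete _
  rw [isOpen_induced_iff] at hopen
  obtain ⟨U, hU, hUeq⟩ := hopen
  have h0U : (0 : Fin n → ℝ) ∈ U := by
    have : (0 : D) ∈ (Subtype.val ⁻¹' U : Set D) := by rw [hUeq]; rfl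
    exact this
  have hcont : Filter.Tendsto (fun t : ℝ => t • x) (nhds 0) (nhds 0) := by
    have := (continuous_id.smul (continuous_const : Continuous fun _ : ℝ => x)).tendsto (0 : ℝ)
    simpa using (show Filter.Tendsto (fun t : ℝ => t • x) (nhds 0) (nhds ((0 : ℝ) • x)) from this)
  have hev : ∀ᶠ t in nhds (0 : ℝ), t • x ∈ U := hcont.eventually (hU.mem_nhds h0U)
  have hev' : ∀ᶠ t in nhdsWithin (0 : ℝ) {0}ᶜ, t • x ∈ U ∧ t ∈ ({0}ᶜ : Set ℝ) :=
    (hev.filter_mono nhdsWithin_le_nhds).and eventually_mem_nhdsWithin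
  obtain ⟨t, htU, ht0⟩ := hev'.exists
  have : (⟨t • x, h t⟩ : D) ∈ (Subtype.val ⁻¹' U : Set D) := htU
  rw [hUeq] at this
  have htx : t • x = 0 := congrArg Subtype.val this
  rcases smul_eq_zero.mp htx with h1 | h2
  · exact absurd h1 ht0
  · exact h2

/-- A complement of `E` containing any subspace disjoint from `E`. -/
lemma exists_compl_ge {K V : Type*} [DivisionRing K] [AddCommGroup V] [Module K V]
    (E S : Submodule K V) (h : E ⊓ S = ⊥) : ∃ W, S ≤ W ∧ IsCompl E W := by
  obtain ⟨W', hW'⟩ := Submodule.exists_isCompl (E ⊔ S)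
  refine ⟨S ⊔ W', le_sup_left, ?_, ?_⟩
  · rw [disjoint_iff, eq_bot_iff]
    rintro x ⟨hxE, hxSW⟩
    obtain ⟨s, hs, w, hw, rfl⟩ := Submodule.mem_sup.mp hxSW
    have hwE : w ∈ E ⊔ S := by
      have : w = (s + w) - s := (add_sub_cancel_left s w).symm
      rw [this]
      exact Submodule.sub_mem _ (le_sup_left (α := Submodule K V) hxE)
        (le_sup_right (α := Submodule K V) hs)
    have hw0 : w = 0 := by
      have := hW'.disjoint.le_bot ⟨hwE, hw⟩
      simpa using this
    subst hw0
    have : s + 0 ∈ E ⊓ S := ⟨hxE, by simpa using hs⟩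
    rw [h] at this
    simpa using this
  · rw [codisjoint_iff, eq_top_iff]
    have : E ⊔ (S ⊔ W') = (E ⊔ S) ⊔ W' := by rw [sup_assoc]
    rw [this, hW'.codisjoint.eq_top]

/-- Any linear subspace contained in `E + D` (with `D` discrete and transverse
to `E`) lies in `E`; hence the maximal dimension of a subspace contained in
`E + D` is `dim E`. -/
theorem subspace_subset_of_subset_add_discrete (n : ℕ) (E : Submodule ℝ (Fin n → ℝ))
    (D : AddSubgroup (Fin n → ℝ)) (hD : DiscreteTopology D)
    (htrans : E ⊓ Submodule.span ℝ (D : Set (Fin n → ℝ)) = ⊥) :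
    (∀ V : Submodule ℝ (Fin n → ℝ),
        (V : Set (Fin n → ℝ)) ⊆ (E : Set (Fin n → ℝ)) + (D : Set (Fin n → ℝ)) → V ≤ E) ∧
      pdim ((E : Set (Fin n → ℝ)) + (D : Set (Fin n → ℝ))) = Module.finrank ℝ E := by
  obtain ⟨W, hSW, hEW⟩ := exists_compl_ge E (Submodule.span ℝ (D : Set (Fin n → ℝ))) htrans
  set π := W.linearProjOfIsCompl E hEW.symm with hπ
  have hπE : ∀ x ∈ E, π x = 0 := fun x hx =>
    Submodule.linearProjOfIsCompl_apply_right hEW.symm ⟨x, hx⟩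
  have hπW : ∀ x (hx : x ∈ W), π x = ⟨x, hx⟩ := fun x hx =>
    Submodule.linearProjOfIsCompl_apply_left hEW.symm ⟨x, hx⟩
  have hπD : ∀ x ∈ D, (π x : Fin n → ℝ) = x := by
    intro x hx
    have hxW : x ∈ W := hSW (Submodule.subset_span hx)
    rw [hπW x hxW]
  have key : ∀ V : Submodule ℝ (Fin n → ℝ),
      (V : Set (Fin n → ℝ)) ⊆ (E : Set (Fin n → ℝ)) + (D : Set (Fin n → ℝ)) → V ≤ E := by
    intro V hV v hv
    -- the projection of any element of V lies in D
    have hπVD : ∀ u ∈ V, (π u : Fin n → ℝ) ∈ D := by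
      intro u hu
      obtain ⟨e, he, d, hd, rfl⟩ := hV hu
      have : π (e + d) = π e + π d := map_add π e d
      have heq : (π (e + d) : Fin n → ℝ) = d := by
        rw [this]
        push_cast
        rw [show (π e : Fin n → ℝ) = 0 by rw [hπE e he]; rfl, hπD d hd, zero_add]
      rw [heq]; exact hd
    have hall : ∀ t : ℝ, t • (π v : Fin n → ℝ) ∈ D := by
      intro t
      have htv : t • v ∈ V := V.smul_mem t hv
      have := hπVD (t • v) htv
      rwa [map_smul, Submodule.coe_smul] at this
    have hπv0 : (π v : Fin n → ℝ) = 0 := line_in_discrete_eq_zero D hD _ hall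
    -- decompose v and conclude
    obtain ⟨e, he, d, hd, rfl⟩ := hV hv
    have : (π (e + d) : Fin n → ℝ) = d := by
      rw [map_add]
      push_cast
      rw [show (π e : Fin n → ℝ) = 0 by rw [hπE e he]; rfl, hπD d hd, zero_add]
    rw [hπv0] at this
    rw [← this]
    simpa using he
  refine ⟨key, ?_⟩
  have hmemE : (E : Set (Fin n → ℝ)) ⊆ (E : Set (Fin n → ℝ)) + (D : Set (Fin n → ℝ)) :=
    fun x hx => ⟨x, hx, 0, D.zero_mem, add_zero x⟩
  have hmem : Module.finrank ℝ E ∈ {d : ℕ | ∃ V : Submodule ℝ (Fin n → ℝ),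
      (V : Set (Fin n → ℝ)) ⊆ (E : Set (Fin n → ℝ)) + (D : Set (Fin n → ℝ)) ∧
      Module.finrank ℝ V = d} := ⟨E, hmemE, rfl⟩
  have hub : ∀ d ∈ {d : ℕ | ∃ V : Submodule ℝ (Fin n → ℝ),
      (V : Set (Fin n → ℝ)) ⊆ (E : Set (Fin n → ℝ)) + (D : Set (Fin n → ℝ)) ∧
      Module.finrank ℝ V = d}, d ≤ Module.finrank ℝ E := by
    rintro d ⟨V, hV, rfl⟩
    exact Submodule.finrank_mono (key V hV)
  exact le_antisymm (csSup_le ⟨_, hmem⟩ hub) (le_csSup ⟨_, hub⟩ hmem)
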